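/- Helly property for median graphs: let G be a median graph and let Y_1, …, Y_n (n ≥ 1) be nonempty convex sets of vertices of G that pairwise intersect (Y_i ∩ Y_j ≠ ∅ for all i, j). Then the total intersection Y_1 ∩ ⋯ ∩ Y_n is nonempty. -/
import Mathlib


/-- `m` is a median of `x`, `y`, `z` in the graph `G`. -/
def IsMedianOf {V : Type*} (G : SimpleGraph V) (m x y z : V) : Prop :=
  G.dist x y = G.dist x m + G.dist m y ∧
  G.dist y z = G.dist y m + G.dist m z ∧
  G.dist x z = G.dist x m + G.dist m z

/-- A median graph: connected, and every triple of vertices has a unique median. -/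
def MedianGraph {V : Type*} (G : SimpleGraph V) : Prop :=
  G.Connected ∧ ∀ x y z : V, ∃! m : V, IsMedianOf G m x y z

/-- A set `S` of vertices is convex: every vertex on a geodesic (a walk realizing
the graph distance) between two vertices of `S` belongs to `S`. -/
def ConvexSet {V : Type*} (G : SimpleGraph V) (S : Set V) : Prop :=
  ∀ u ∈ S, ∀ v ∈ S, ∀ w : G.Walk u v, w.length = G.dist u v → ∀ x ∈ w.support, x ∈ S

/-- If `dist u v = dist u m + dist m v` and `u, v` belong to a convex set `S`,
then `m ∈ S`. -/
lemma mem_of_convex_between {V : Type*} {G : SimpleGraph V} (hc : G.Connected)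
    {S : Set V} (hS : ConvexSet G S) {u v m : V} (hu : u ∈ S) (hv : v ∈ S)
    (h : G.dist u v = G.dist u m + G.dist m v) : m ∈ S := by
  obtain ⟨p, hp⟩ := hc.exists_walk_length_eq_dist u m
  obtain ⟨q, hq⟩ := hc.exists_walk_length_eq_dist m v
  refine hS u hu v hv (p.append q) ?_ m ?_
  · rw [SimpleGraph.Walk.length_append, hp, hq, h]
  · rw [SimpleGraph.Walk.mem_support_append_iff]
    exact Or.inr q.start_mem_support

/-- Helly property for three convex sets. -/
lemma helly3 {V : Type*} (G : SimpleGraph V) (hG : MedianGraph G)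
    (A B C : Set V) (hA : ConvexSet G A) (hB : ConvexSet G B) (hC : ConvexSet G C)
    (hAB : (A ∩ B).Nonempty) (hAC : (A ∩ C).Nonempty) (hBC : (B ∩ C).Nonempty) :
    (A ∩ B ∩ C).Nonempty := by
  obtain ⟨x, hxB, hxC⟩ := hBC
  obtain ⟨y, hyA, hyC⟩ := hAC
  obtain ⟨z, hzA, hzB⟩ := hAB
  obtain ⟨m, ⟨h1, h2, h3⟩, -⟩ := hG.2 x y z
  refine ⟨m, ⟨?_, ?_⟩, ?_⟩
  · exact mem_of_convex_between hG.1 hA hyA hzA h2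
  · exact mem_of_convex_between hG.1 hB hxB hzB h3
  · exact mem_of_convex_between hG.1 hC hxC hyC h1

lemma convex_inter {V : Type*} {G : SimpleGraph V} {S T : Set V}
    (hS : ConvexSet G S) (hT : ConvexSet G T) : ConvexSet G (S ∩ T) :=
  fun u hu v hv w hw x hx =>
    ⟨hS u hu.1 v hv.1 w hw x hx, hT u hu.2 v hv.2 w hw x hx⟩

/-- Helly property for median graphs: finitely many nonempty convex sets of vertices
that pairwise intersect have a common point. -/
theorem helly_median {V : Type*} (G : SimpleGraph V) (hG : MedianGraph G)
    (n : ℕ) (hn : 1 ≤ n) (Y : Fin n → Set V)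
    (hne : ∀ i, (Y i).Nonempty) (hconv : ∀ i, ConvexSet G (Y i))
    (hpair : ∀ i j, (Y i ∩ Y j).Nonempty) :
    (⋂ i, Y i).Nonempty := by
  induction n with
  | zero => omega
  | succ n ih =>
    rcases Nat.eq_zero_or_pos n with rfl | hn'
    · obtain ⟨a, ha⟩ := hne 0
      exact ⟨a, Set.mem_iInter.2 fun i => by rwa [Fin.eq_zero i]⟩
    · set Z : Fin n → Set V := fun i => Y i.castSucc ∩ Y (Fin.last n) with hZ
      have key : (⋂ i, Z i).Nonempty := by
        refine ih hn' Z (fun i => hpair _ _) (fun i => convex_inter (hconv _) (hconv _)) ?_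
        intro i j
        obtain ⟨a, ⟨ha1, ha2⟩, ha3⟩ := helly3 G hG (Y i.castSucc) (Y j.castSucc)
          (Y (Fin.last n)) (hconv _) (hconv _) (hconv _) (hpair _ _) (hpair _ _) (hpair _ _)
        exact ⟨a, ⟨ha1, ha3⟩, ⟨ha2, ha3⟩⟩
      obtain ⟨a, ha⟩ := key
      rw [Set.mem_iInter] at ha
      refine ⟨a, Set.mem_iInter.2 fun j => ?_⟩
      rcases eq_or_ne j (Fin.last n) with rfl | hj
      · exact (ha ⟨0, hn'⟩).2
      · obtain ⟨i, rfl⟩ := Fin.exists_castSucc_eq.2 hj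
        exact (ha i).1
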